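/- Let (c_j)_{j≥1} be real numbers and (λ_j)_{j≥1} positive reals, and define f_{−1} = 0, f_0 = 1, and f_j(x) = (x − c_j)f_{j−1}(x) − λ_j f_{j−2}(x) for j ≥ 1. Then for every j ≥ 1, f_j has j distinct real roots and f_{j−1} interlaces f_j (the roots of f_{j−1} strictly separate those of f_j). -/

import Mathlib

open Polynomial

lemma favard_sign_prod : ∀ (n : ℕ) (s : Fin n → ℝ) (x : ℝ) (i : ℕ), i ≤ n →
    (∀ k : Fin n, (k : ℕ) < i → s k < x) → (∀ k : Fin n, i ≤ (k : ℕ) → x < s k) →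
    0 < (-1 : ℝ) ^ (n - i) * ∏ k, (x - s k) := by
  intro n
  induction n with
  | zero => intro s x i hi _ _; interval_cases i; simp
  | succ m ih =>
    intro s x i hi hlt hgt
    rw [Fin.prod_univ_castSucc]
    rcases Nat.lt_or_ge i (m + 1) with h | h
    · have h1 := ih (fun k => s k.castSucc) x i (by omega)
        (fun k hk => hlt k.castSucc (by simpa using hk))
        (fun k hk => hgt k.castSucc (by simpa using hk))
      have h2 : x < s (Fin.last m) := hgt (Fin.last m) (by simp; omega)
      have he : m + 1 - i = (m - i) + 1 := by omega
      rw [he, pow_succ]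
      nlinarith [h1, h2]
    · have hi' : i = m + 1 := by omega
      subst hi'
      rw [Nat.sub_self, pow_zero, one_mul]
      have : ∀ k : Fin (m+1), 0 < x - s k := fun k => by
        have := hlt k k.isLt; linarith
      have hp : 0 < ∏ k : Fin m, (x - s k.castSucc) :=
        Finset.prod_pos fun k _ => this k.castSucc
      have := this (Fin.last m)
      positivity

lemma favard_roots_eq {p : Polynomial ℝ} {n : ℕ} (hm : p.Monic) (hd : p.natDegree = n)
    (u : Fin n → ℝ) (hu : Function.Injective u) (hr : ∀ k, p.eval (u k) = 0) :
    p.roots = Multiset.map u Finset.univ.val := by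
  have hp0 : p ≠ 0 := hm.ne_zero
  have hnodup : (Multiset.map u Finset.univ.val).Nodup := Finset.univ.nodup.map hu
  have hle : Multiset.map u Finset.univ.val ≤ p.roots := by
    rw [Multiset.le_iff_subset hnodup]
    intro a ha
    obtain ⟨k, _, rfl⟩ := Multiset.mem_map.mp ha
    exact (mem_roots hp0).mpr (hr k)
  refine (Multiset.eq_of_le_of_card_le hle ?_).symm
  calc Multiset.card p.roots ≤ p.natDegree := p.card_roots'
    _ = Multiset.card (Multiset.map u Finset.univ.val) := by simp [hd]

lemma favard_root_between {p : Polynomial ℝ} {a b : ℝ} (hab : a < b)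
    (h : p.eval a * p.eval b < 0) : ∃ x, a < x ∧ x < b ∧ p.eval x = 0 := by
  have hc : ContinuousOn (fun x => p.eval x) (Set.Icc a b) := p.continuous.continuousOn
  rcases lt_or_ge (p.eval a) 0 with ha | ha
  · have hb : 0 < p.eval b := by nlinarith
    obtain ⟨x, hx, hx0⟩ := intermediate_value_Ioo hab.le hc ⟨ha, hb⟩
    exact ⟨x, hx.1, hx.2, hx0⟩
  · have hb : p.eval b < 0 := by nlinarith
    have ha' : 0 < p.eval a := by nlinarith
    obtain ⟨x, hx, hx0⟩ := intermediate_value_Ioo' hab.le hc ⟨hb, ha'⟩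
    exact ⟨x, hx.1, hx.2, hx0⟩

lemma favard_opp {A E1 E0 : ℝ} (hA : A * A = 1) (h1 : 0 < A * E1) (h0 : 0 < A * -1 * E0) :
    E1 * E0 < 0 := by
  rcases mul_self_eq_one_iff.mp hA with h | h <;> subst h <;> nlinarith


theorem favard_interlacing (c lam : ℕ → ℝ) (hlam : ∀ j, 1 ≤ j → 0 < lam j)
    (f : ℕ → Polynomial ℝ)
    (hf0 : f 0 = 1)
    (hf1 : f 1 = Polynomial.X - Polynomial.C (c 1))
    (hfrec : ∀ j, 2 ≤ j →
      f j = (Polynomial.X - Polynomial.C (c j)) * f (j - 1) - Polynomial.C (lam j) * f (j - 2)) :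
    ∀ j : ℕ, ∃ (t : Fin (j + 1) → ℝ) (s : Fin j → ℝ),
      StrictMono t ∧ StrictMono s ∧
      (f (j + 1)).roots = Multiset.map t Finset.univ.val ∧
      (f j).roots = Multiset.map s Finset.univ.val ∧
      ∀ i : Fin j, t i.castSucc < s i ∧ s i < t i.succ := by
  -- monicity and degree
  have key : ∀ j, (f j).Monic ∧ (f j).natDegree = j := by
    have H : ∀ j, ((f j).Monic ∧ (f j).natDegree = j) ∧
        ((f (j+1)).Monic ∧ (f (j+1)).natDegree = j+1) := by
      intro j
      induction j with
      | zero =>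
        refine ⟨⟨by rw [hf0]; exact monic_one, by rw [hf0]; exact natDegree_one⟩,
          ⟨by rw [hf1]; exact monic_X_sub_C _, by rw [hf1]; exact natDegree_X_sub_C (c 1)⟩⟩
      | succ m ih =>
        refine ⟨ih.2, ?_⟩
        have hrec : f (m+2) = (X - C (c (m+2))) * f (m+1) - C (lam (m+2)) * f m := by
          simpa using hfrec (m+2) (by omega)
        have hpm : ((X - C (c (m+2))) * f (m+1)).Monic := (monic_X_sub_C _).mul ih.2.1
        have hpd : ((X - C (c (m+2))) * f (m+1)).natDegree = m + 2 := by
          rw [natDegree_mul (X_sub_C_ne_zero _) ih.2.1.ne_zero, natDegree_X_sub_C, ih.2.2]; omega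
        have hqd : (-(C (lam (m+2)) * f m)).degree < ((X - C (c (m+2))) * f (m+1)).degree := by
          rw [degree_neg, degree_eq_natDegree hpm.ne_zero, hpd]
        -- degree q ≤ natDegree (C * f m) ≤ m < m+2
          calc (C (lam (m+2)) * f m).degree ≤ ((C (lam (m+2)) * f m).natDegree : WithBot ℕ) :=
              degree_le_natDegree
            _ ≤ (m : WithBot ℕ) := by
              exact_mod_cast Nat.cast_le.mpr ((natDegree_C_mul_le _ _).trans_eq ih.1.2)
            _ < ((m + 2 : ℕ) : WithBot ℕ) := Nat.cast_lt.mpr (by omega)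
        have hsub : f (m + 2) = (X - C (c (m+2))) * f (m+1) + -(C (lam (m+2)) * f m) := by
          rw [hrec]; ring
        constructor
        · rw [hsub]; exact hpm.add_of_left hqd
        · rw [hsub]
          have := degree_add_eq_left_of_degree_lt hqd
          rw [degree_eq_natDegree hpm.ne_zero, hpd] at this
          exact natDegree_eq_of_degree_eq_some (by exact_mod_cast this)
    exact fun j => (H j).1
  intro j
  induction j with
  | zero =>
    refine ⟨fun _ => c 1, Fin.elim0, fun a b h => absurd h (by omega), fun i => i.elim0, ?_, ?_, fun i => i.elim0⟩
    · rw [hf1, roots_X_sub_C]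
      simp
    · rw [hf0, roots_one]
      simp
  | succ j ih =>
    obtain ⟨t, s, hmt, hms, hrt, hrs, hint⟩ := ih
    have hmonp := (key (j+2)).1
    have hdegp := (key (j+2)).2
    have hrec : f (j+2) = (X - C (c (j+2))) * f (j+1) - C (lam (j+2)) * f j := by
      simpa using hfrec (j+2) (by omega)
    have hfj1ne : f (j+1) ≠ 0 := (key (j+1)).1.ne_zero
    have troot : ∀ i : Fin (j+1), (f (j+1)).eval (t i) = 0 := by
      intro i
      have hmem : t i ∈ (f (j+1)).roots := by
        rw [hrt]; exact Multiset.mem_map.mpr ⟨i, by simp, rfl⟩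
      simpa using ((mem_roots hfj1ne).mp hmem)
    have hprod : ∀ x, (f j).eval x = ∏ i, (x - s i) := by
      have hsp : Splits (f j) :=
        splits_iff_card_roots.mpr (by rw [hrs, (key j).2]; simp)
      have heq := hsp.eq_prod_roots_of_monic (key j).1
      rw [hrs] at heq
      intro x
      rw [heq, eval_multiset_prod]
      simp [Finset.prod_eq_multiset_prod, Multiset.map_map, Function.comp_def]
    have signj : ∀ i : Fin (j+1), 0 < (-1:ℝ)^(j - (i:ℕ)) * (f j).eval (t i) := by
      intro i
      rw [hprod]
      apply favard_sign_prod j s (t i) i (Nat.lt_succ_iff.mp i.isLt)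
      · intro k hk
        have h1 : s k < t k.succ := (hint k).2
        have h2 : t k.succ ≤ t i := hmt.monotone (by simp [Fin.le_def]; omega)
        linarith
      · intro k hk
        have h1 : t i ≤ t k.castSucc := hmt.monotone (by simp [Fin.le_def]; omega)
        have h2 : t k.castSucc < s k := (hint k).1
        linarith
    have signp : ∀ i : Fin (j+1), 0 < (-1:ℝ)^(j + 1 - (i:ℕ)) * (f (j+2)).eval (t i) := by
      intro i
      have he : (f (j+2)).eval (t i) = -(lam (j+2) * (f j).eval (t i)) := by
        rw [hrec]; simp [troot i]
      have hl : 0 < lam (j+2) := hlam _ (by omega)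
      have hpow : (j+1) - (i:ℕ) = (j - (i:ℕ)) + 1 := by
        have := Nat.lt_succ_iff.mp i.isLt; omega
      rw [he, hpow, pow_succ]
      nlinarith [signj i, mul_pos hl (signj i)]
    have hlow : ∃ a, (f (j+2)).eval a = 0 ∧ a < t 0 := by
      set q := (f (j+2)).comp (-X) with hq
      have hqe : ∀ x, q.eval x = (f (j+2)).eval (-x) := by
        intro x; rw [hq, eval_comp]; simp
      have hqd : q.natDegree = j + 2 := by
        rw [hq, natDegree_comp]; simp [hdegp]
      have hqlc : q.leadingCoeff = (-1:ℝ)^(j+2) := by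
        rw [hq, leadingCoeff_comp (by simp)]
        simp [hmonp.leadingCoeff, hdegp]
      set r := C ((-1:ℝ)^(j+2)) * q with hr
      have hne : ((-1:ℝ)^(j+2)) ≠ 0 := pow_ne_zero _ (by norm_num)
      have hrlc : r.leadingCoeff = 1 := by
        rw [hr, leadingCoeff_mul, leadingCoeff_C, hqlc, ← mul_pow]; norm_num
      have hrd : 0 < r.degree := by
        have h1 : r.natDegree = j + 2 := by rw [hr, natDegree_C_mul hne, hqd]
        exact natDegree_pos_iff_degree_pos.mp (by omega)
      have htend := tendsto_atTop_of_leadingCoeff_nonneg r hrd (by rw [hrlc]; norm_num)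
      obtain ⟨x, hx1, hx2⟩ :=
        ((htend.eventually_gt_atTop 0).and (Filter.eventually_gt_atTop (-(t 0)))).exists
      have hre : r.eval x = (-1:ℝ)^(j+2) * (f (j+2)).eval (-x) := by
        rw [hr, eval_mul, eval_C, hqe]
      have hx1' : 0 < (-1:ℝ)^(j+2) * (f (j+2)).eval (-x) := by rw [← hre]; exact hx1
      have hab : -x < t 0 := by linarith
      have h0 : 0 < (-1:ℝ)^(j+1) * (f (j+2)).eval (t 0) := by simpa using signp 0
      have hA : ((-1:ℝ)^(j+1)) * ((-1:ℝ)^(j+1)) = 1 := by rw [← mul_pow]; norm_num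
      have hp2 : (-1:ℝ)^(j+2) = (-1)^(j+1) * -1 := pow_succ _ _
      rw [hp2] at hx1'
      have hmul : (f (j+2)).eval (-x) * (f (j+2)).eval (t 0) < 0 := by
        have := favard_opp hA h0 hx1'
        linarith
      obtain ⟨a, ha1, ha2, ha3⟩ := favard_root_between hab hmul
      exact ⟨a, ha3, ha2⟩
    have hb : ∀ i : Fin (j+1), ∃ x, (f (j+2)).eval x = 0 ∧ t i < x ∧
        ∀ h : (i:ℕ)+1 < j+1, x < t ⟨(i:ℕ)+1, h⟩ := by
      intro i
      by_cases hc : (i:ℕ)+1 < j+1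
      · have hlt : t i < t ⟨(i:ℕ)+1, hc⟩ := hmt (by simp [Fin.lt_def])
        have h1 := signp i
        have e1 : (j+1) - (i:ℕ) = (j - (i:ℕ)) + 1 := by omega
        rw [e1, pow_succ] at h1
        have h2 : 0 < (-1:ℝ)^(j - (i:ℕ)) * (f (j+2)).eval (t ⟨(i:ℕ)+1, hc⟩) := by
          have e2 : (j+1) - ((i:ℕ)+1) = j - (i:ℕ) := by omega
          simpa [e2] using signp ⟨(i:ℕ)+1, hc⟩
        have hA : ((-1:ℝ)^(j-(i:ℕ))) * ((-1:ℝ)^(j-(i:ℕ))) = 1 := by rw [← mul_pow]; norm_num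
        have hmul : (f (j+2)).eval (t i) * (f (j+2)).eval (t ⟨(i:ℕ)+1,hc⟩) < 0 := by
          have h1' : 0 < (-1:ℝ)^(j-(i:ℕ)) * -1 * (f (j+2)).eval (t i) := by linarith [h1]
          have := favard_opp hA h2 h1'
          linarith
        obtain ⟨x, hx1, hx2, hx3⟩ := favard_root_between hlt hmul
        exact ⟨x, hx3, hx1, fun _ => hx2⟩
      · have hival : (i:ℕ) = j := by have := i.isLt; omega
        have h1 : (f (j+2)).eval (t i) < 0 := by
          have h := signp i
          rw [hival] at h
          simp at h
          linarith
        have hdp : 0 < (f (j+2)).degree := by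
          rw [degree_eq_natDegree hmonp.ne_zero, hdegp]
          exact_mod_cast Nat.succ_pos (j+1)
        have htend := tendsto_atTop_of_leadingCoeff_nonneg _ hdp
          (by rw [hmonp.leadingCoeff]; norm_num)
        obtain ⟨B, hB1, hB2⟩ :=
          ((htend.eventually_gt_atTop 0).and (Filter.eventually_gt_atTop (t i))).exists
        have hmul : (f (j+2)).eval (t i) * (f (j+2)).eval B < 0 := by nlinarith
        obtain ⟨x, hx1, hx2, hx3⟩ := favard_root_between hB2 hmul
        exact ⟨x, hx3, hx1, fun h => absurd h hc⟩
    choose b hb1 hb2 hb3 using hb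
    obtain ⟨a, ha1, ha2⟩ := hlow
    set u : Fin (j+2) → ℝ := Fin.cases a b with hu
    have huint : ∀ i : Fin (j+1), u i.castSucc < t i ∧ t i < u i.succ := by
      intro i
      constructor
      · induction i using Fin.cases with
        | zero => simpa [hu] using ha2
        | succ k =>
          rw [← Fin.succ_castSucc]
          have h := hb3 k.castSucc (by simpa using k.isLt)
          exact h
      · simpa [hu] using hb2 i
    have hmu : StrictMono u :=
      Fin.strictMono_iff_lt_succ.mpr fun i => (huint i).1.trans (huint i).2
    have huroot : ∀ k : Fin (j+2), (f (j+2)).eval (u k) = 0 := by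
      intro k
      induction k using Fin.cases with
      | zero => simpa [hu] using ha1
      | succ i => simpa [hu] using hb1 i
    have hru := favard_roots_eq hmonp hdegp u hmu.injective huroot
    exact ⟨u, t, hmu, hmt, hru, hrt, huint⟩
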